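/- arXiv:2401.00801 — 2 statements merged into one kernel-verified Lean document; each statement's English description precedes it below -/
import Mathlib

section
/- Let d ∈ ℕ with d ≥ 3 and ε ∈ (0,1). If x^{(1)}, …, x^{(n)} ∈ [0,1]^d are such that the indicator functions of the anchored boxes [0, x^{(i)}) are pairwise ε-separated in L¹, i.e., λ^d([0,x^{(i)}) Δ [0,x^{(j)})) > ε for all i ≠ j, then n ≤ (d^d/d!) · ε^{−d} ≤ (1/√(2πd)) · e^d · ε^{−d}. In other words, the L¹-packing number of the family C_d of anchored boxes satisfies P(ε, C_d, ‖·‖_{L¹}) ≤ (d^d/d!)·ε^{−d}. -/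
open MeasureTheory

/-- The anchored box `[0, x) = ∏_j [0, x_j)` in `ℝ^d`. -/
def anchoredBox (d : ℕ) (x : Fin d → ℝ) : Set (Fin d → ℝ) :=
  Set.univ.pi fun j => Set.Ico 0 (x j)

open Finset

lemma pk_box_meas (d : ℕ) (v : Fin d → ℝ) : MeasurableSet (anchoredBox d v) :=
  MeasurableSet.univ_pi fun _ => measurableSet_Ico

lemma pk_box_vol (d : ℕ) (v : Fin d → ℝ) (hv : ∀ j, 0 ≤ v j) :
    volume (anchoredBox d v) = ENNReal.ofReal (∏ j, v j) := by
  rw [anchoredBox, volume_pi_pi]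
  simp only [Real.volume_Ico, sub_zero]
  rw [← ENNReal.ofReal_prod_of_nonneg]
  intro i _
  exact hv i

lemma pk_inter (d : ℕ) (a b : Fin d → ℝ) :
    anchoredBox d a ∩ anchoredBox d b = anchoredBox d (fun j => min (a j) (b j)) := by
  unfold anchoredBox
  rw [← Set.pi_inter_distrib]
  exact congrArg Set.univ.pi (funext fun j => by rw [Set.Ico_inter_Ico, max_self])

lemma pk_vol (d : ℕ) (a b : Fin d → ℝ) (ha : ∀ j, 0 ≤ a j) (hb : ∀ j, 0 ≤ b j) :
    (volume (symmDiff (anchoredBox d a) (anchoredBox d b))).toReal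
      = (∏ j, a j) + (∏ j, b j) - 2 * ∏ j, min (a j) (b j) := by
  set A := anchoredBox d a
  set B := anchoredBox d b
  have hmA : MeasurableSet A := pk_box_meas d a
  have hmB : MeasurableSet B := pk_box_meas d b
  have hm : ∀ j, 0 ≤ min (a j) (b j) := fun j => le_min (ha j) (hb j)
  have hIv : volume (A ∩ B) = ENNReal.ofReal (∏ j, min (a j) (b j)) := by
    rw [pk_inter d a b]; exact pk_box_vol d _ hm
  have hAv : volume A = ENNReal.ofReal (∏ j, a j) := pk_box_vol d a ha
  have hBv : volume B = ENNReal.ofReal (∏ j, b j) := pk_box_vol d b hb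
  have hAfin : volume A ≠ ⊤ := by rw [hAv]; exact ENNReal.ofReal_ne_top
  have hBfin : volume B ≠ ⊤ := by rw [hBv]; exact ENNReal.ofReal_ne_top
  have h1 : volume (A \ B) + volume (A ∩ B) = volume A := measure_diff_add_inter A hmB
  have h2 : volume (B \ A) + volume (B ∩ A) = volume B := measure_diff_add_inter B hmA
  have hΔ : volume (symmDiff A B) = volume (A \ B) + volume (B \ A) := by
    rw [Set.symmDiff_def]
    exact measure_union (disjoint_sdiff_sdiff) (hmB.diff hmA)
  have hfin1 : volume (A \ B) ≠ ⊤ :=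
    ne_top_of_le_ne_top hAfin (measure_mono Set.diff_subset)
  have hfin2 : volume (B \ A) ≠ ⊤ :=
    ne_top_of_le_ne_top hBfin (measure_mono Set.diff_subset)
  have hfinI : volume (A ∩ B) ≠ ⊤ :=
    ne_top_of_le_ne_top hAfin (measure_mono Set.inter_subset_left)
  have t1 : (volume (A \ B)).toReal + (volume (A ∩ B)).toReal = (∏ j, a j) := by
    rw [← ENNReal.toReal_add hfin1 hfinI, h1, hAv,
      ENNReal.toReal_ofReal (Finset.prod_nonneg fun j _ => ha j)]
  have t2 : (volume (B \ A)).toReal + (volume (A ∩ B)).toReal = (∏ j, b j) := by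
    rw [Set.inter_comm A B, ← ENNReal.toReal_add hfin2 (by rwa [Set.inter_comm A B] at hfinI),
      h2, hBv, ENNReal.toReal_ofReal (Finset.prod_nonneg fun j _ => hb j)]
  have tI : (volume (A ∩ B)).toReal = ∏ j, min (a j) (b j) := by
    rw [hIv, ENNReal.toReal_ofReal (Finset.prod_nonneg fun j _ => hm j)]
  rw [hΔ, ENNReal.toReal_add hfin1 hfin2]
  rw [tI] at t1 t2
  linarith


/-- Supermodularity of products of nonnegative reals. -/
lemma pk_supermod (f g : ℕ → ℝ) (m : ℕ) (hf : ∀ k < m, 0 ≤ f k) (hg : ∀ k < m, 0 ≤ g k) :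
    (∏ k ∈ range m, f k) + (∏ k ∈ range m, g k)
      ≤ (∏ k ∈ range m, max (f k) (g k)) + ∏ k ∈ range m, min (f k) (g k) := by
  induction m with
  | zero => simp
  | succ m ih =>
    have hf' : ∀ k < m, 0 ≤ f k := fun k hk => hf k (hk.trans (Nat.lt_succ_self m))
    have hg' : ∀ k < m, 0 ≤ g k := fun k hk => hg k (hk.trans (Nat.lt_succ_self m))
    have ih' := ih hf' hg'
    have hfm : 0 ≤ f m := hf m (Nat.lt_succ_self m)
    have hgm : 0 ≤ g m := hg m (Nat.lt_succ_self m)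
    set A := ∏ k ∈ range m, max (f k) (g k) with hA
    set B := ∏ k ∈ range m, min (f k) (g k) with hB
    set C := ∏ k ∈ range m, f k with hC
    set E := ∏ k ∈ range m, g k with hE
    have hCA : C ≤ A := prod_le_prod (fun k hk => hf' k (mem_range.mp hk))
      (fun k _ => le_max_left _ _)
    have hEA : E ≤ A := prod_le_prod (fun k hk => hg' k (mem_range.mp hk))
      (fun k _ => le_max_right _ _)
    have hBC : B ≤ C := prod_le_prod (fun k hk => le_min (hf' k (mem_range.mp hk)) (hg' k (mem_range.mp hk)))
      (fun k _ => min_le_left _ _)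
    have hBE : B ≤ E := prod_le_prod (fun k hk => le_min (hf' k (mem_range.mp hk)) (hg' k (mem_range.mp hk)))
      (fun k _ => min_le_right _ _)
    rw [prod_range_succ, prod_range_succ, prod_range_succ, prod_range_succ]
    rcases le_total (f m) (g m) with h | h
    · rw [max_eq_right h, min_eq_left h]
      nlinarith [mul_nonneg (sub_nonneg.mpr h) (sub_nonneg.mpr hEA),
        mul_nonneg hfm (by linarith : (0:ℝ) ≤ A + B - C - E)]
    · rw [max_eq_left h, min_eq_right h]
      nlinarith [mul_nonneg (sub_nonneg.mpr h) (sub_nonneg.mpr hCA),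
        mul_nonneg hgm (by linarith : (0:ℝ) ≤ A + B - C - E)]

/-- Telescoping bound for differences of products. -/
lemma pk_telescope (l u : ℕ → ℝ) (m : ℕ) (h0 : ∀ k < m, 0 ≤ l k)
    (hlu : ∀ k < m, l k ≤ u k) (hu1 : ∀ k < m, u k ≤ 1) :
    (∏ k ∈ range m, u k) - (∏ k ∈ range m, l k)
      ≤ ∑ j ∈ range m, (u j - l j) * ∏ k ∈ range j, l k := by
  induction m with
  | zero => simp
  | succ m ih =>
    have h0' : ∀ k < m, 0 ≤ l k := fun k hk => h0 k (hk.trans (Nat.lt_succ_self m))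
    have hlu' : ∀ k < m, l k ≤ u k := fun k hk => hlu k (hk.trans (Nat.lt_succ_self m))
    have hu1' : ∀ k < m, u k ≤ 1 := fun k hk => hu1 k (hk.trans (Nat.lt_succ_self m))
    have ih' := ih h0' hlu' hu1'
    have hL0 : 0 ≤ ∏ k ∈ range m, l k :=
      prod_nonneg fun k hk => h0' k (mem_range.mp hk)
    have hLU : (∏ k ∈ range m, l k) ≤ ∏ k ∈ range m, u k :=
      prod_le_prod (fun k hk => h0' k (mem_range.mp hk)) (fun k hk => hlu' k (mem_range.mp hk))
    have hU1 : (∏ k ∈ range m, u k) ≤ 1 :=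
      prod_le_one (fun k hk => (h0' k (mem_range.mp hk)).trans (hlu' k (mem_range.mp hk)))
        (fun k hk => hu1' k (mem_range.mp hk))
    have hum : u m ≤ 1 := hu1 m (Nat.lt_succ_self m)
    have hlm : l m ≤ u m := hlu m (Nat.lt_succ_self m)
    have hl0 : 0 ≤ l m := h0 m (Nat.lt_succ_self m)
    rw [prod_range_succ, prod_range_succ, sum_range_succ]
    nlinarith [mul_nonneg (sub_nonneg.mpr hlm) hL0,
      mul_le_mul_of_nonneg_right (sub_nonneg.mpr hLU) (le_trans hl0 hlm)]

/-- The greedy cell-label sequence. -/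
noncomputable def pkS (N d : ℕ) (θ : ℝ) (X : ℕ → ℝ) : ℕ → ℕ
  | 0 => 0
  | j + 1 => min (pkS N d θ X j + 1 + ⌊(1 - X j) * (1 - θ * pkS N d θ X j) / θ⌋₊)
      (N - d + (j + 1))

section pkSeq

variable (N d : ℕ) (θ : ℝ) (X : ℕ → ℝ)

lemma pkS_zero : pkS N d θ X 0 = 0 := rfl

lemma pkS_succ (j : ℕ) : pkS N d θ X (j + 1)
    = min (pkS N d θ X j + 1 + ⌊(1 - X j) * (1 - θ * pkS N d θ X j) / θ⌋₊)
      (N - d + (j + 1)) := rfl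

lemma pkS_le : ∀ j, pkS N d θ X j ≤ N - d + j
  | 0 => Nat.zero_le _
  | j + 1 => min_le_right _ _

lemma pkS_lt (j : ℕ) : pkS N d θ X j < pkS N d θ X (j + 1) := by
  rw [pkS_succ]
  refine lt_min (by omega) ?_
  have := pkS_le N d θ X j
  omega

/-- strict monotonicity -/
lemma pkS_strictMono : StrictMono (pkS N d θ X) :=
  strictMono_nat_of_lt_succ (pkS_lt N d θ X)

end pkSeq

section pkBounds

variable {N d : ℕ} {θ : ℝ}

/-- cast of the cap -/
lemma pk_cap_cast (hdN : d ≤ N) (j : ℕ) : ((N - d + j : ℕ) : ℝ) = (N : ℝ) - d + j := by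
  push_cast [Nat.cast_sub hdN]; ring

/-- positivity of 1 - θ k for k ≤ N - 1 -/
lemma pk_pos_aux (hθ : 0 < θ) (hθN2 : θ * N < 1 + θ) {k : ℝ} (hk : k ≤ (N : ℝ) - 1) :
    0 < 1 - θ * k := by
  nlinarith

/-- `P j > 0` for `j < d` -/
lemma pkP_pos (hθ : 0 < θ) (hdN : d ≤ N) (hθN2 : θ * N < 1 + θ) (X : ℕ → ℝ) {j : ℕ} (hj : j < d) :
    0 < 1 - θ * (pkS N d θ X j : ℝ) := by
  refine pk_pos_aux hθ hθN2 ?_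
  have h := pkS_le N d θ X j
  have : ((pkS N d θ X j : ℕ) : ℝ) ≤ ((N - d + j : ℕ) : ℝ) := by exact_mod_cast h
  rw [pk_cap_cast hdN] at this
  have : (pkS N d θ X j : ℝ) ≤ (N : ℝ) - d + j := this
  have hdj : (j : ℝ) ≤ (d : ℝ) - 1 := by
    have : (j : ℝ) + 1 ≤ d := by exact_mod_cast hj
    linarith
  linarith

end pkBounds

/-- Upper cell bound. -/
noncomputable def pkU (N d : ℕ) (θ : ℝ) (X : ℕ → ℝ) (j : ℕ) : ℝ :=
  1 - (θ * (pkS N d θ X (j + 1) : ℝ) - θ * (pkS N d θ X j : ℝ) - θ)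
      / (1 - θ * (pkS N d θ X j : ℝ))

/-- Lower cell bound. -/
noncomputable def pkL (N d : ℕ) (θ : ℝ) (X : ℕ → ℝ) (j : ℕ) : ℝ :=
  if pkS N d θ X (j + 1) = N - d + (j + 1) then 0 else
  1 - (θ * (pkS N d θ X (j + 1) : ℝ) - θ * (pkS N d θ X j : ℝ))
      / (1 - θ * (pkS N d θ X j : ℝ))

section pkCell

variable {N d : ℕ} {θ : ℝ} {X : ℕ → ℝ}

/-- The coordinate is below the upper cell bound. -/
lemma pk_le_U (hθ : 0 < θ) (hdN : d ≤ N) (hθN2 : θ * N < 1 + θ)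
    {j : ℕ} (hj : j < d) (hX0 : 0 ≤ X j) (hX1 : X j ≤ 1) :
    X j ≤ pkU N d θ X j := by
  have hP := pkP_pos hθ hdN hθN2 X hj
  set S := pkS N d θ X j with hS
  set S' := pkS N d θ X (j + 1) with hS'
  set P := 1 - θ * (S : ℝ) with hPdef
  have harg : 0 ≤ (1 - X j) * P / θ :=
    div_nonneg (mul_nonneg (by linarith) hP.le) hθ.le
  have hmin : S' ≤ S + 1 + ⌊(1 - X j) * P / θ⌋₊ := by
    rw [hS', pkS_succ]; exact min_le_left _ _
  have hfloor : (⌊(1 - X j) * P / θ⌋₊ : ℝ) ≤ (1 - X j) * P / θ := Nat.floor_le harg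
  have hcast : (S' : ℝ) ≤ (S : ℝ) + 1 + (1 - X j) * P / θ := by
    calc (S' : ℝ) ≤ ((S + 1 + ⌊(1 - X j) * P / θ⌋₊ : ℕ) : ℝ) := by exact_mod_cast hmin
    _ = (S : ℝ) + 1 + (⌊(1 - X j) * P / θ⌋₊ : ℝ) := by push_cast; ring
    _ ≤ (S : ℝ) + 1 + (1 - X j) * P / θ := by linarith
  have key : ((S' : ℝ) - S - 1) * θ ≤ (1 - X j) * P :=
    (le_div_iff₀ hθ).mp (by linarith)
  rw [pkU]
  have h3 : (θ * (S' : ℝ) - θ * S - θ) / P ≤ 1 - X j := by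
    rw [div_le_iff₀ hP]; nlinarith
  linarith

/-- In the uncapped case, the coordinate is (strictly) above the lower cell bound. -/
lemma pk_L_lt (hθ : 0 < θ) (hdN : d ≤ N) (hθN2 : θ * N < 1 + θ)
    {j : ℕ} (hj : j < d) (hX0 : 0 ≤ X j) (hX1 : X j ≤ 1)
    (hnc : pkS N d θ X (j + 1) ≠ N - d + (j + 1)) :
    pkL N d θ X j < X j := by
  have hP := pkP_pos hθ hdN hθN2 X hj
  set S := pkS N d θ X j with hS
  set S' := pkS N d θ X (j + 1) with hS'
  set P := 1 - θ * (S : ℝ) with hPdef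
  have heq : S' = S + 1 + ⌊(1 - X j) * P / θ⌋₊ := by
    rw [hS', pkS_succ]
    rcases min_cases (S + 1 + ⌊(1 - X j) * P / θ⌋₊) (N - d + (j + 1)) with ⟨h, _⟩ | ⟨h, _⟩
    · exact h
    · exfalso; exact hnc (by rw [hS', pkS_succ, h])
  have hlt : (1 - X j) * P / θ < (⌊(1 - X j) * P / θ⌋₊ : ℝ) + 1 := Nat.lt_floor_add_one _
  have hcast : (S' : ℝ) = (S : ℝ) + 1 + (⌊(1 - X j) * P / θ⌋₊ : ℝ) := by
    rw [heq]; push_cast; ring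
  have key : (1 - X j) * P < ((S' : ℝ) - S) * θ := by
    have h2 : (1 - X j) * P / θ < (S' : ℝ) - S := by linarith
    exact (div_lt_iff₀ hθ).mp h2
  rw [pkL, if_neg hnc]
  have h3 : 1 - X j < (θ * (S' : ℝ) - θ * S) / P := by
    rw [lt_div_iff₀ hP]; nlinarith
  linarith

/-- The lower bound is nonnegative. -/
lemma pk_L_nonneg (hθ : 0 < θ) (hdN : d ≤ N) (hθN1 : 1 ≤ θ * N) (hθN2 : θ * N < 1 + θ)
    {j : ℕ} (hj : j < d) : 0 ≤ pkL N d θ X j := by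
  rw [pkL]
  split_ifs with hc
  · exact le_refl 0
  · have hP := pkP_pos hθ hdN hθN2 X hj
    set S := pkS N d θ X j with hS
    set S' := pkS N d θ X (j + 1) with hS'
    have hS'le : S' ≤ N - d + j := by
      have h1 := pkS_le N d θ X (j + 1)
      omega
    have hS'r : (S' : ℝ) ≤ (N : ℝ) - 1 := by
      have h2 : ((S' : ℕ) : ℝ) ≤ ((N - d + j : ℕ) : ℝ) := by exact_mod_cast hS'le
      rw [pk_cap_cast hdN] at h2
      have hdj : (j : ℝ) + 1 ≤ (d : ℝ) := by exact_mod_cast hj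
      linarith
    have hP' : 0 < 1 - θ * (S' : ℝ) := pk_pos_aux hθ hθN2 hS'r
    have h4 : (θ * (S' : ℝ) - θ * S) / (1 - θ * (S : ℝ)) ≤ 1 := by
      rw [div_le_one hP]; nlinarith
    linarith

end pkCell

section pkCell2

variable {N d : ℕ} {θ : ℝ} {X : ℕ → ℝ}

/-- uncapped: pkL = P (j+1) / P j -/
lemma pk_L_eq (hnc : pkS N d θ X (j + 1) ≠ N - d + (j + 1))
    (hP : (1 : ℝ) - θ * (pkS N d θ X j : ℝ) ≠ 0) :
    pkL N d θ X j = (1 - θ * (pkS N d θ X (j + 1) : ℝ)) / (1 - θ * (pkS N d θ X j : ℝ)) := by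
  rw [pkL, if_neg hnc]
  field_simp
  ring

/-- uncapped: pkU - pkL = θ / P j -/
lemma pk_U_sub_L (hnc : pkS N d θ X (j + 1) ≠ N - d + (j + 1)) :
    pkU N d θ X j - pkL N d θ X j = θ / (1 - θ * (pkS N d θ X j : ℝ)) := by
  rw [pkU, pkL, if_neg hnc]
  ring

/-- pkU ≤ 1 -/
lemma pk_U_le_one (hθ : 0 < θ) (hdN : d ≤ N) (hθN2 : θ * N < 1 + θ) {j : ℕ} (hj : j < d) :
    pkU N d θ X j ≤ 1 := by
  have hP := pkP_pos hθ hdN hθN2 X hj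
  rw [pkU]
  have hmono : pkS N d θ X j + 1 ≤ pkS N d θ X (j + 1) := pkS_lt N d θ X j
  have hc : (pkS N d θ X j : ℝ) + 1 ≤ (pkS N d θ X (j + 1) : ℝ) := by exact_mod_cast hmono
  have hnum : 0 ≤ θ * (pkS N d θ X (j + 1) : ℝ) - θ * (pkS N d θ X j : ℝ) - θ := by nlinarith
  have := div_nonneg hnum hP.le
  linarith

/-- capped: value of pkU * P j -/
lemma pk_U_capped (hθ : 0 < θ) (hdN : d ≤ N) (hθN2 : θ * N < 1 + θ)
    {j : ℕ} (hj : j < d) (hc : pkS N d θ X (j + 1) = N - d + (j + 1)) :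
    pkU N d θ X j * (1 - θ * (pkS N d θ X j : ℝ))
      = 1 - θ * ((N : ℝ) - d + (j + 1)) + θ := by
  have hP := pkP_pos hθ hdN hθN2 X hj
  rw [pkU]
  have : (pkS N d θ X (j + 1) : ℝ) = (N : ℝ) - d + (j + 1) := by
    rw [hc, pk_cap_cast hdN]; push_cast; ring
  field_simp
  rw [this]
  ring

end pkCell2

section pkSum

variable {N d : ℕ} {θ : ℝ} {X : ℕ → ℝ}

open Finset

/-- nothing capped below j: product of lower bounds telescopes -/
lemma pk_prod_L (hθ : 0 < θ) (hdN : d ≤ N) (hθN2 : θ * N < 1 + θ)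
    {j : ℕ} (hj : j ≤ d)
    (hnc : ∀ k < j, pkS N d θ X (k + 1) ≠ N - d + (k + 1)) :
    ∏ k ∈ range j, pkL N d θ X k = 1 - θ * (pkS N d θ X j : ℝ) := by
  induction j with
  | zero => simp [pkS_zero]
  | succ j ih =>
    have hjd : j < d := hj
    have hP := pkP_pos hθ hdN hθN2 X hjd
    rw [prod_range_succ, ih hjd.le (fun k hk => hnc k (hk.trans (Nat.lt_succ_self j))),
      pk_L_eq (hnc j (Nat.lt_succ_self j)) hP.ne']
    rw [mul_div_cancel₀ _ hP.ne']

/-- The main sum bound: total cell diameter is at most `θ * d`. -/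
lemma pk_sum_le (hθ : 0 < θ) (hdN : d ≤ N) (hθN1 : 1 ≤ θ * N) (hθN2 : θ * N < 1 + θ) :
    ∑ j ∈ range d, (pkU N d θ X j - pkL N d θ X j) * ∏ k ∈ range j, pkL N d θ X k
      ≤ θ * d := by
  set f : ℕ → ℝ := fun j => (pkU N d θ X j - pkL N d θ X j) * ∏ k ∈ range j, pkL N d θ X k
    with hf
  have huncap : ∀ j < d, (∀ k < j + 1, pkS N d θ X (k + 1) ≠ N - d + (k + 1)) → f j = θ := by
    intro j hj hnc
    have hP := pkP_pos hθ hdN hθN2 X hj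
    rw [hf]
    simp only
    rw [pk_U_sub_L (hnc j (Nat.lt_succ_self j)),
      pk_prod_L hθ hdN hθN2 hj.le (fun k hk => hnc k (hk.trans (Nat.lt_succ_self j))),
      div_mul_cancel₀ _ hP.ne']
  set F := (range d).filter (fun j => pkS N d θ X (j + 1) = N - d + (j + 1)) with hF
  by_cases hFe : F = ∅
  · have hall : ∀ k < d, pkS N d θ X (k + 1) ≠ N - d + (k + 1) := by
      intro k hk hcap
      have : k ∈ F := by rw [hF]; exact mem_filter.mpr ⟨mem_range.mpr hk, hcap⟩
      rw [hFe] at this; exact absurd this (notMem_empty k)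
    have : ∀ j ∈ range d, f j = θ := fun j hj =>
      huncap j (mem_range.mp hj) (fun k hk => hall k (hk.trans_le (mem_range.mp hj)))
    rw [sum_congr rfl this, sum_const, card_range, nsmul_eq_mul]
    rw [mul_comm]
  · have hne : F.Nonempty := nonempty_iff_ne_empty.mpr hFe
    set c := F.min' hne with hc
    have hcF : c ∈ F := min'_mem F hne
    have hcd : c < d := mem_range.mp (mem_filter.mp hcF).1
    have hccap : pkS N d θ X (c + 1) = N - d + (c + 1) := (mem_filter.mp hcF).2
    have hcmin : ∀ j ∈ F, c ≤ j := fun j hj => min'_le F j hj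
    have hbelow : ∀ k < c, pkS N d θ X (k + 1) ≠ N - d + (k + 1) := by
      intro k hk hcap
      have : k ∈ F := mem_filter.mpr ⟨mem_range.mpr (hk.trans hcd), hcap⟩
      exact absurd (hcmin k this) (Nat.not_le.mpr hk)
    -- terms above c vanish
    have hzero : ∀ j, c < j → f j = 0 := by
      intro j hcj
      have hLc : pkL N d θ X c = 0 := by rw [pkL, if_pos hccap]
      rw [hf]
      simp only
      rw [prod_eq_zero (mem_range.mpr hcj) hLc, mul_zero]
    -- value at c
    have hfc : f c ≤ θ * ((d : ℝ) - c) := by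
      have hLc : pkL N d θ X c = 0 := by rw [pkL, if_pos hccap]
      rw [hf]
      simp only
      rw [hLc, sub_zero, pk_prod_L hθ hdN hθN2 hcd.le hbelow,
        pk_U_capped hθ hdN hθN2 hcd hccap]
      push_cast
      nlinarith
    have hsplit : ∑ j ∈ range d, f j = (∑ j ∈ range c, f j) + f c + ∑ j ∈ Ico (c + 1) d, f j := by
      rw [range_eq_Ico, ← sum_Ico_consecutive f (Nat.zero_le (c + 1)) hcd,
        ← range_eq_Ico, sum_range_succ]
    have h1 : ∑ j ∈ range c, f j = c * θ := by
      rw [sum_congr rfl (fun j hj => huncap j ((mem_range.mp hj).trans hcd)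
        (fun k hk => hbelow k (hk.trans_le (mem_range.mp hj)))), sum_const, card_range,
        nsmul_eq_mul]
    have h2 : ∑ j ∈ Ico (c + 1) d, f j = 0 :=
      sum_eq_zero fun j hj => hzero j (mem_Ico.mp hj).1
    rw [hsplit, h1, h2, add_zero]
    nlinarith [hfc]

end pkSum


section new
variable {N d : ℕ} {θ : ℝ} {X Y : ℕ → ℝ}

/-- lower bound is below the coordinate -/
lemma pk_L_le (hθ : 0 < θ) (hdN : d ≤ N) (hθN2 : θ * N < 1 + θ)
    {j : ℕ} (hj : j < d) (hX0 : 0 ≤ X j) (hX1 : X j ≤ 1) :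
    pkL N d θ X j ≤ X j := by
  by_cases hc : pkS N d θ X (j + 1) = N - d + (j + 1)
  · rw [pkL, if_pos hc]; exact hX0
  · exact (pk_L_lt hθ hdN hθN2 hj hX0 hX1 hc).le

/-- Two points with the same label sequence are `θ*d`-близко. -/
lemma pk_cell_close (hθ : 0 < θ) (hdN : d ≤ N) (hθN1 : 1 ≤ θ * N) (hθN2 : θ * N < 1 + θ)
    (hX : ∀ k < d, 0 ≤ X k ∧ X k ≤ 1) (hY : ∀ k < d, 0 ≤ Y k ∧ Y k ≤ 1)
    (hseq : ∀ j ≤ d, pkS N d θ X j = pkS N d θ Y j) :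
    (∏ k ∈ range d, X k) + (∏ k ∈ range d, Y k)
      - 2 * ∏ k ∈ range d, min (X k) (Y k) ≤ θ * d := by
  have hUY : ∀ j < d, pkU N d θ Y j = pkU N d θ X j := by
    intro j hj
    rw [pkU, pkU, hseq j hj.le, hseq (j + 1) hj]
  have hLY : ∀ j < d, pkL N d θ Y j = pkL N d θ X j := by
    intro j hj
    rw [pkL, pkL, hseq j hj.le, hseq (j + 1) hj]
  have hXU : ∀ k < d, X k ≤ pkU N d θ X k :=
    fun k hk => pk_le_U hθ hdN hθN2 hk (hX k hk).1 (hX k hk).2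
  have hYU : ∀ k < d, Y k ≤ pkU N d θ X k := by
    intro k hk
    rw [← hUY k hk]
    exact pk_le_U hθ hdN hθN2 hk (hY k hk).1 (hY k hk).2
  have hLX : ∀ k < d, pkL N d θ X k ≤ X k :=
    fun k hk => pk_L_le hθ hdN hθN2 hk (hX k hk).1 (hX k hk).2
  have hLYY : ∀ k < d, pkL N d θ X k ≤ Y k := by
    intro k hk
    rw [← hLY k hk]
    exact pk_L_le hθ hdN hθN2 hk (hY k hk).1 (hY k hk).2
  have hL0 : ∀ k < d, 0 ≤ pkL N d θ X k := fun k hk => pk_L_nonneg hθ hdN hθN1 hθN2 hk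
  have hU1 : ∀ k < d, pkU N d θ X k ≤ 1 := fun k hk => pk_U_le_one hθ hdN hθN2 hk
  have hsup := pk_supermod X Y d (fun k hk => (hX k hk).1) (fun k hk => (hY k hk).1)
  have hPmax : (∏ k ∈ range d, max (X k) (Y k)) ≤ ∏ k ∈ range d, pkU N d θ X k :=
    prod_le_prod (fun k hk => le_max_of_le_left (hX k (mem_range.mp hk)).1)
      (fun k hk => max_le (hXU k (mem_range.mp hk)) (hYU k (mem_range.mp hk)))
  have hPmin : (∏ k ∈ range d, pkL N d θ X k) ≤ ∏ k ∈ range d, min (X k) (Y k) :=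
    prod_le_prod (fun k hk => hL0 k (mem_range.mp hk))
      (fun k hk => le_min (hLX k (mem_range.mp hk)) (hLYY k (mem_range.mp hk)))
  have htel := pk_telescope (pkL N d θ X) (pkU N d θ X) d hL0
    (fun k hk => le_trans (hLX k hk) (hXU k hk)) hU1
  have hsum := pk_sum_le (X := X) hθ hdN hθN1 hθN2
  linarith
end new


/-- Packing bound for anchored boxes: if the anchored boxes `[0, x i)`, `i = 1, …, n`, with
corners `x i ∈ [0,1]^d` are pairwise `ε`-separated in `L¹`, i.e.
`λ^d([0, x i) Δ [0, x j)) > ε` for `i ≠ j`, then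
`n ≤ (d^d/d!) ε^{-d} ≤ (1/√(2πd)) e^d ε^{-d}` (for `d ≥ 3`, `ε ∈ (0,1)`). -/
theorem packing_anchored_boxes (d : ℕ) (hd : 3 ≤ d) (ε : ℝ) (hε : ε ∈ Set.Ioo (0 : ℝ) 1)
    (n : ℕ) (x : Fin n → (Fin d → ℝ)) (hx : ∀ i, x i ∈ Set.Icc (0 : Fin d → ℝ) 1)
    (hsep : ∀ i j, i ≠ j →
      ε < (volume (symmDiff (anchoredBox d (x i)) (anchoredBox d (x j)))).toReal) :
    (n : ℝ) ≤ (d : ℝ) ^ d / (Nat.factorial d) * (1 / ε) ^ d ∧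
    (d : ℝ) ^ d / (Nat.factorial d) * (1 / ε) ^ d ≤
      1 / Real.sqrt (2 * Real.pi * d) * Real.exp d * (1 / ε) ^ d := by
  obtain ⟨hε0, hε1⟩ := hε
  have hd0 : 0 < d := by omega
  have hdR : (0 : ℝ) < d := by exact_mod_cast hd0
  set θ : ℝ := ε / d with hθdef
  have hθ : 0 < θ := div_pos hε0 hdR
  set D : ℝ := (d : ℝ) / ε with hDdef
  have hD0 : (0 : ℝ) ≤ D := by positivity
  obtain ⟨N, hDle, hNlt⟩ : ∃ N : ℕ, D ≤ (N : ℝ) ∧ (N : ℝ) < D + 1 :=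
    ⟨⌈D⌉₊, Nat.le_ceil D, Nat.ceil_lt_add_one hD0⟩
  have hdD : (d : ℝ) < D := by
    rw [hDdef, lt_div_iff₀ hε0]; nlinarith
  have hdltN : d < N := by exact_mod_cast hdD.trans_le hDle
  have hdN : d ≤ N := hdltN.le
  have hθD : θ * D = 1 := by
    rw [hθdef, hDdef]; field_simp
  have hθN1 : 1 ≤ θ * N := by
    calc (1 : ℝ) = θ * D := hθD.symm
    _ ≤ θ * N := by nlinarith
  have hθN2 : θ * N < 1 + θ := by nlinarith
  have hθd : θ * d = ε := by rw [hθdef]; field_simp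
  -- extended coordinates
  set Xf : Fin n → ℕ → ℝ := fun i k => if h : k < d then x i ⟨k, h⟩ else 1 with hXf
  have hXbound : ∀ i, ∀ k, (hk : k < d) → 0 ≤ Xf i k ∧ Xf i k ≤ 1 := by
    intro i k hk
    have h1 := (hx i).1
    have h2 := (hx i).2
    rw [Pi.le_def] at h1 h2
    simp only [hXf, dif_pos hk]
    exact ⟨h1 ⟨k, hk⟩, h2 ⟨k, hk⟩⟩
  have hXeq : ∀ i (j : Fin d), Xf i (j : ℕ) = x i j := by
    intro i j
    simp only [hXf, dif_pos j.isLt]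
  -- the labels
  set lbl : Fin n → Finset ℕ :=
    fun i => image (fun j : Fin d => pkS N d θ (Xf i) ((j : ℕ) + 1)) univ with hlbl
  have hmono : ∀ i, StrictMono (fun j : Fin d => pkS N d θ (Xf i) ((j : ℕ) + 1)) := by
    intro i a b hab
    exact pkS_strictMono N d θ (Xf i) (Nat.succ_lt_succ hab)
  have hcard : ∀ i, (lbl i).card = d := by
    intro i
    rw [hlbl]
    simp only
    rw [card_image_of_injective _ (hmono i).injective, card_univ, Fintype.card_fin]
  have hsub : ∀ i, lbl i ∈ Finset.powersetCard d (Finset.Icc 1 N) := by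
    intro i
    rw [Finset.mem_powersetCard]
    refine ⟨?_, hcard i⟩
    intro s hs
    rw [hlbl] at hs
    simp only [mem_image, mem_univ, true_and] at hs
    obtain ⟨j, rfl⟩ := hs
    obtain ⟨m, hm⟩ := j
    refine Finset.mem_Icc.mpr ⟨?_, ?_⟩
    · have h0 := pkS_strictMono N d θ (Xf i) (show 0 < m + 1 by omega)
      rw [pkS_zero] at h0
      simp only [Fin.val_mk]
      omega
    · have h1 := pkS_le N d θ (Xf i) (m + 1)
      simp only [Fin.val_mk]
      show pkS N d θ (Xf i) (m + 1) ≤ N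
      omega
  -- injectivity of labels
  have hinj : Function.Injective lbl := by
    intro i i' heq
    by_contra hne
    have hfs' : ∀ j : Fin d, pkS N d θ (Xf i') ((j : ℕ) + 1) ∈ lbl i := by
      intro j
      rw [heq]
      exact mem_image_of_mem _ (mem_univ j)
    have e1 := Finset.orderEmbOfFin_unique (hcard i)
      (f := fun j : Fin d => pkS N d θ (Xf i) ((j : ℕ) + 1))
      (fun j => mem_image_of_mem _ (mem_univ j)) (hmono i)
    have e2 := Finset.orderEmbOfFin_unique (hcard i)
      (f := fun j : Fin d => pkS N d θ (Xf i') ((j : ℕ) + 1)) hfs' (hmono i')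
    have hfeq : ∀ j ≤ d, pkS N d θ (Xf i) j = pkS N d θ (Xf i') j := by
      intro j hj
      match j, hj with
      | 0, _ => rfl
      | (m + 1), hj =>
        have hm : m < d := hj
        have := congrFun (e1.trans e2.symm) ⟨m, hm⟩
        simpa using this
    have hclose := pk_cell_close hθ hdN hθN1 hθN2 (fun k hk => hXbound i k hk)
      (fun k hk => hXbound i' k hk) hfeq
    have hvol := pk_vol d (x i) (x i')
      (fun j => by have h1 := (hx i).1; rw [Pi.le_def] at h1; exact h1 j)
      (fun j => by have h1 := (hx i').1; rw [Pi.le_def] at h1; exact h1 j)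
    have hsep' := hsep i i' hne
    rw [hvol] at hsep'
    have hp1 : (∏ j, x i j) = ∏ k ∈ range d, Xf i k := by
      rw [← Fin.prod_univ_eq_prod_range (fun k => Xf i k) d]
      exact prod_congr rfl fun j _ => (hXeq i j).symm
    have hp2 : (∏ j, x i' j) = ∏ k ∈ range d, Xf i' k := by
      rw [← Fin.prod_univ_eq_prod_range (fun k => Xf i' k) d]
      exact prod_congr rfl fun j _ => (hXeq i' j).symm
    have hp3 : (∏ j, min (x i j) (x i' j)) = ∏ k ∈ range d, min (Xf i k) (Xf i' k) := by
      rw [← Fin.prod_univ_eq_prod_range (fun k => min (Xf i k) (Xf i' k)) d]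
      exact prod_congr rfl fun j _ => by rw [hXeq i j, hXeq i' j]
    rw [hp1, hp2, hp3] at hsep'
    rw [hθd] at hclose
    linarith
  -- counting
  have hcount : n ≤ N.choose d := by
    have h := Finset.card_le_card_of_injOn (s := (univ : Finset (Fin n)))
      (t := Finset.powersetCard d (Finset.Icc 1 N)) lbl (fun i _ => hsub i)
      (fun a _ b _ h => hinj h)
    rw [Finset.card_univ, Fintype.card_fin, Finset.card_powersetCard, Nat.card_Icc] at h
    simpa using h
  -- the binomial bound
  have hfacpos : (0 : ℝ) < (Nat.factorial d : ℝ) := by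
    exact_mod_cast Nat.factorial_pos d
  have hchoose : (N.choose d : ℝ) * (Nat.factorial d : ℝ) = ∏ i ∈ range d, ((N : ℝ) - i) := by
    have h1 : (Nat.factorial d) * (N.choose d) = N.descFactorial d :=
      (Nat.descFactorial_eq_factorial_mul_choose N d).symm
    have h2 : (N.descFactorial d : ℝ) = ∏ i ∈ range d, ((N : ℝ) - i) := by
      rw [Nat.descFactorial_eq_prod_range, Nat.cast_prod]
      refine prod_congr rfl fun i hi => ?_
      have : i ≤ N := le_of_lt (lt_of_lt_of_le (mem_range.mp hi) hdN)
      rw [Nat.cast_sub this]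
    rw [← h2, ← h1]
    push_cast
    ring
  have hN4 : (4 : ℝ) ≤ (N : ℝ) := by
    have : 4 ≤ N := by omega
    exact_mod_cast this
  have hprodD : (∏ i ∈ range d, ((N : ℝ) - i)) ≤ D ^ d := by
    obtain ⟨e, rfl⟩ : ∃ e, d = e + 3 := ⟨d - 3, by omega⟩
    rw [prod_range_succ', prod_range_succ', prod_range_succ']
    have hQ0 : (0 : ℝ) ≤ ∏ i ∈ range e, ((N : ℝ) - ((i + 1 + 1 + 1 : ℕ) : ℝ)) := by
      refine prod_nonneg fun i hi => ?_
      have : ((i + 1 + 1 + 1 : ℕ) : ℝ) ≤ (N : ℝ) := by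
        have h3 : i + 1 + 1 + 1 ≤ N := by
          have := mem_range.mp hi; omega
        exact_mod_cast h3
      linarith
    have hQle : (∏ i ∈ range e, ((N : ℝ) - ((i + 1 + 1 + 1 : ℕ) : ℝ))) ≤ D ^ e := by
      have hDe : D ^ e = ∏ _i ∈ range e, D := by rw [prod_const, card_range]
      rw [hDe]
      refine prod_le_prod (fun i hi => ?_) (fun i hi => ?_)
      · have h3 : i + 1 + 1 + 1 ≤ N := by
          have := mem_range.mp hi; omega
        have : ((i + 1 + 1 + 1 : ℕ) : ℝ) ≤ (N : ℝ) := by exact_mod_cast h3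
        linarith
      · have : (1 : ℝ) ≤ ((i + 1 + 1 + 1 : ℕ) : ℝ) := by
          have h3 : 1 ≤ i + 1 + 1 + 1 := by omega
          exact_mod_cast h3
        linarith
    have hABC : ((N : ℝ) - ((0 + 1 + 1 : ℕ) : ℝ)) * ((N : ℝ) - ((0 + 1 : ℕ) : ℝ))
        * ((N : ℝ) - ((0 : ℕ) : ℝ)) ≤ D ^ 3 := by
      push_cast
      have hB : (N : ℝ) - 1 ≤ D := by linarith
      have hBpow : ((N : ℝ) - 1) ^ 3 ≤ D ^ 3 := pow_le_pow_left₀ (by linarith) hB 3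
      nlinarith [hBpow, hN4]
    have hABC0 : (0 : ℝ) ≤ ((N : ℝ) - ((0 + 1 + 1 : ℕ) : ℝ)) * ((N : ℝ) - ((0 + 1 : ℕ) : ℝ))
        * ((N : ℝ) - ((0 : ℕ) : ℝ)) := by
      push_cast
      exact mul_nonneg (mul_nonneg (by linarith) (by linarith)) (by linarith)
    calc (∏ i ∈ range e, ((N : ℝ) - ((i + 1 + 1 + 1 : ℕ) : ℝ)))
          * ((N : ℝ) - ((0 + 1 + 1 : ℕ) : ℝ)) * ((N : ℝ) - ((0 + 1 : ℕ) : ℝ))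
          * ((N : ℝ) - ((0 : ℕ) : ℝ))
        = (∏ i ∈ range e, ((N : ℝ) - ((i + 1 + 1 + 1 : ℕ) : ℝ)))
          * (((N : ℝ) - ((0 + 1 + 1 : ℕ) : ℝ)) * ((N : ℝ) - ((0 + 1 : ℕ) : ℝ))
            * ((N : ℝ) - ((0 : ℕ) : ℝ))) := by ring
      _ ≤ D ^ e * D ^ 3 := mul_le_mul hQle hABC hABC0 (pow_nonneg hD0 e)
      _ = D ^ (e + 3) := by rw [← pow_add]
  have hfirst : (n : ℝ) ≤ (d : ℝ) ^ d / (Nat.factorial d) * (1 / ε) ^ d := by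
    have h1 : (n : ℝ) ≤ (N.choose d : ℝ) := by exact_mod_cast hcount
    have h2 : (N.choose d : ℝ) ≤ D ^ d / (Nat.factorial d) := by
      rw [le_div_iff₀ hfacpos, hchoose]
      exact hprodD
    have h3 : D ^ d / (Nat.factorial d) = (d : ℝ) ^ d / (Nat.factorial d) * (1 / ε) ^ d := by
      have : D = (d : ℝ) * (1 / ε) := by rw [hDdef]; ring
      rw [this, mul_pow]
      ring
    linarith [h3 ▸ h2]
  refine ⟨hfirst, ?_⟩
  -- Stirling part
  have hπ : (0 : ℝ) < Real.pi := Real.pi_pos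
  have hS : (0 : ℝ) < Real.sqrt Real.pi := Real.sqrt_pos.mpr hπ
  have hT : (0 : ℝ) < Real.sqrt (2 * d) := Real.sqrt_pos.mpr (by positivity)
  have hstir : Real.sqrt Real.pi ≤ Stirling.stirlingSeq d := by
    refine le_of_tendsto Stirling.tendsto_stirlingSeq_sqrt_pi ?_
    filter_upwards [Filter.eventually_ge_atTop d] with m hm
    obtain ⟨k, rfl⟩ : ∃ k, d = k + 1 := ⟨d - 1, by omega⟩
    obtain ⟨l, rfl⟩ : ∃ l, m = l + 1 := ⟨m - 1, by omega⟩
    have hkl : k ≤ l := by omega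
    have hlog := Stirling.log_stirlingSeq'_antitone hkl
    exact (Real.log_le_log_iff (Stirling.stirlingSeq'_pos l)
      (Stirling.stirlingSeq'_pos k)).mp hlog
  have hfac_ge : Real.sqrt Real.pi * (Real.sqrt (2 * d) * ((d : ℝ) / Real.exp 1) ^ d)
      ≤ (Nat.factorial d : ℝ) := by
    have hdef : Stirling.stirlingSeq d
        = (Nat.factorial d : ℝ) / (Real.sqrt (2 * d) * ((d : ℝ) / Real.exp 1) ^ d) := rfl
    rw [hdef, le_div_iff₀ (by positivity)] at hstir
    nlinarith [hstir]
  have hsqrt2 : Real.sqrt (2 * Real.pi * (d : ℝ))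
      = Real.sqrt Real.pi * Real.sqrt (2 * d) := by
    rw [← Real.sqrt_mul hπ.le]
    congr 1
    ring
  have hed : (0 : ℝ) < Real.exp (d : ℝ) := Real.exp_pos _
  have h5 : (0 : ℝ) < Real.sqrt Real.pi * Real.sqrt (2 * d) := by positivity
  have hexp : ((d : ℝ) / Real.exp 1) ^ d = (d : ℝ) ^ d / Real.exp (d : ℝ) := by
    rw [div_pow, Real.exp_one_pow]
  rw [hexp] at hfac_ge
  have key : Real.sqrt Real.pi * Real.sqrt (2 * d) * (d : ℝ) ^ d
      ≤ (Nat.factorial d : ℝ) * Real.exp (d : ℝ) := by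
    have h7 := mul_le_mul_of_nonneg_right hfac_ge hed.le
    have h8 : Real.sqrt Real.pi * (Real.sqrt (2 * d) * ((d : ℝ) ^ d / Real.exp (d : ℝ)))
        * Real.exp (d : ℝ) = Real.sqrt Real.pi * Real.sqrt (2 * d) * (d : ℝ) ^ d := by
      field_simp
    rw [h8] at h7
    exact h7
  have hsecond : (d : ℝ) ^ d / (Nat.factorial d)
      ≤ 1 / Real.sqrt (2 * Real.pi * d) * Real.exp d := by
    rw [hsqrt2, div_le_iff₀ hfacpos, one_div]
    calc (d : ℝ) ^ d
        = (Real.sqrt Real.pi * Real.sqrt (2 * d))⁻¹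
          * (Real.sqrt Real.pi * Real.sqrt (2 * d) * (d : ℝ) ^ d) := by
          rw [inv_mul_cancel_left₀ h5.ne']
      _ ≤ (Real.sqrt Real.pi * Real.sqrt (2 * d))⁻¹
          * ((Nat.factorial d : ℝ) * Real.exp (d : ℝ)) :=
          mul_le_mul_of_nonneg_left key (inv_nonneg.mpr h5.le)
      _ = (Real.sqrt Real.pi * Real.sqrt (2 * d))⁻¹ * Real.exp (d : ℝ)
          * (Nat.factorial d : ℝ) := by ring
  exact mul_le_mul_of_nonneg_right hsecond (by positivity)
end

section
/- Let d ∈ ℕ with d ≥ 3 and ε ∈ (0,1). Then the minimal cardinality N(ε, C_d, ‖·‖_{L¹}) of a (one-sided) ε-cover of the family C_d of anchored boxes in [0,1]^d satisfies N(ε, C_d, ‖·‖_{L¹}) ≤ 2 · (d^d/d!) · ε^{−d}. -/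
open MeasureTheory

/-- Lebesgue measure restricted to the unit cube `[0,1]^d`. -/
noncomputable def cubeMeasure (d : ℕ) : Measure (Fin d → ℝ) :=
  volume.restrict (Set.Icc (0 : Fin d → ℝ) 1)

/-- `Γ` is a (one-sided) `ε`-cover of the family `C_d` of anchored boxes in `[0,1]^d`:
a finite set of integrable functions on `[0,1]^d` such that for every `x ∈ [0,1]^d` there
are `ℓ, u ∈ Γ` with `ℓ ≤ 1_{[0,x)} ≤ u` pointwise on `[0,1]^d` and `∫ (u - ℓ) dλ^d ≤ ε`. -/
def IsDeltaCoverC (d : ℕ) (ε : ℝ) (Γ : Finset ((Fin d → ℝ) → ℝ)) : Prop :=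
  (∀ g ∈ Γ, Integrable g (cubeMeasure d)) ∧
  ∀ x ∈ Set.Icc (0 : Fin d → ℝ) 1, ∃ l ∈ Γ, ∃ u ∈ Γ,
    (∀ t ∈ Set.Icc (0 : Fin d → ℝ) 1,
      l t ≤ (anchoredBox d x).indicator (fun _ => (1 : ℝ)) t ∧
      (anchoredBox d x).indicator (fun _ => (1 : ℝ)) t ≤ u t) ∧
    ∫ t, (u t - l t) ∂(cubeMeasure d) ≤ ε

/-- The minimal cardinality `N(ε, C_d, ‖·‖_{L¹})` of a (one-sided) `ε`-cover of `C_d`. -/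
noncomputable def deltaCoverNumberC (d : ℕ) (ε : ℝ) : ℕ :=
  sInf { n : ℕ | ∃ Γ : Finset ((Fin d → ℝ) → ℝ), IsDeltaCoverC d ε Γ ∧ Γ.card = n }

namespace CoverAux

attribute [local instance] Classical.propDecidable

open Finset

/-! ### Basic facts about anchored boxes and the cube measure -/

lemma box_measurable (d : ℕ) (y : Fin d → ℝ) : MeasurableSet (anchoredBox d y) :=
  MeasurableSet.univ_pi fun _ => measurableSet_Ico

lemma box_mono {d : ℕ} {y y' : Fin d → ℝ} (h : y ≤ y') :
    anchoredBox d y ⊆ anchoredBox d y' := fun _t ht j hj =>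
  ⟨(ht j hj).1, lt_of_lt_of_le (ht j hj).2 (h j)⟩

lemma box_subset_cube {d : ℕ} {y : Fin d → ℝ} (h1 : y ≤ 1) :
    anchoredBox d y ⊆ Set.Icc (0 : Fin d → ℝ) 1 := by
  intro t ht
  constructor
  · intro j; exact (ht j (Set.mem_univ j)).1
  · intro j; exact le_trans (le_of_lt (ht j (Set.mem_univ j)).2) (h1 j)

instance cubeFinite (d : ℕ) : IsFiniteMeasure (cubeMeasure d) := by
  constructor
  rw [cubeMeasure, Measure.restrict_apply_univ, Real.volume_Icc_pi]
  simp

lemma integrable_box (d : ℕ) (y : Fin d → ℝ) :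
    Integrable ((anchoredBox d y).indicator fun _ => (1 : ℝ)) (cubeMeasure d) :=
  (integrable_const (1 : ℝ)).indicator (box_measurable d y)

lemma integral_box {d : ℕ} {y : Fin d → ℝ} (h0 : 0 ≤ y) (h1 : y ≤ 1) :
    ∫ t, (anchoredBox d y).indicator (fun _ => (1 : ℝ)) t ∂(cubeMeasure d) = ∏ j, y j := by
  have hmeas := box_measurable d y
  have h : (fun _ : Fin d → ℝ => (1:ℝ)) = (1 : (Fin d → ℝ) → ℝ) := rfl
  rw [h, integral_indicator_one hmeas]
  unfold cubeMeasure
  rw [measureReal_def, Measure.restrict_apply hmeas,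
    Set.inter_eq_self_of_subset_left (box_subset_cube h1)]
  unfold anchoredBox
  have h2 : (Set.univ.pi fun j => Set.Ico (0:ℝ) (y j))
      = Set.univ.pi fun j => Set.Ico ((0 : Fin d → ℝ) j) (y j) := rfl
  rw [h2, Real.volume_pi_Ico_toReal h0]
  simp

/-! ### Two elementary product estimates -/

lemma prod_sub_prod_le (n : ℕ) (a b : ℕ → ℝ) (h0 : ∀ i < n, 0 ≤ a i)
    (hab : ∀ i < n, a i ≤ b i) (hb1 : ∀ i < n, b i ≤ 1) :
    ∏ i ∈ range n, b i - ∏ i ∈ range n, a i ≤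
      ∑ j ∈ range n, (b j - a j) * ∏ i ∈ range j, b i := by
  induction n with
  | zero => simp
  | succ n ih =>
    have ih' := ih (fun i hi => h0 i (by omega)) (fun i hi => hab i (by omega))
      (fun i hi => hb1 i (by omega))
    rw [prod_range_succ, prod_range_succ, sum_range_succ]
    have hPa : (0:ℝ) ≤ ∏ i ∈ range n, a i :=
      prod_nonneg fun i hi => h0 i (by simp at hi; omega)
    have hPab : ∏ i ∈ range n, a i ≤ ∏ i ∈ range n, b i := by
      refine prod_le_prod ?_ ?_ <;> intro i hi <;> simp at hi
      · exact h0 i (by omega)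
      · exact hab i (by omega)
    have h0n : 0 ≤ a n := h0 n (by omega)
    have habn : a n ≤ b n := hab n (by omega)
    have hb1n : b n ≤ 1 := hb1 n (by omega)
    nlinarith [mul_le_mul_of_nonneg_left hPab (by linarith : (0:ℝ) ≤ b n - a n)]

lemma prod_ratio (g : ℕ → ℝ) (hg : ∀ k, g k ≠ 0) (j : ℕ) :
    ∏ i ∈ range j, g (i + 1) / g i = g j / g 0 := by
  induction j with
  | zero => simp [div_self (hg 0)]
  | succ j ih =>
    rw [prod_range_succ, ih]
    have h : g j / g 0 * (g (j + 1) / g j) = g (j + 1) / g 0 * (g j / g j) := by ring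
    rw [h, div_self (hg j), mul_one]

/-! ### The nonuniform grid -/

noncomputable def gam (d : ℕ) (ε : ℝ) (k : ℕ) : ℝ := 1 - k * (ε / d)

noncomputable def bigM (d : ℕ) (ε : ℝ) : ℕ := ⌈(d : ℝ) / ε⌉₊

noncomputable def bigN (d : ℕ) (ε : ℝ) : ℕ := bigM d ε - d

section
variable {d : ℕ} {ε : ℝ} (hd : 3 ≤ d) (hε0 : 0 < ε) (hε1 : ε < 1)

lemma gam_succ (k : ℕ) : gam d ε (k + 1) = gam d ε k - ε / d := by
  rw [gam, gam]; push_cast; ring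

include hd hε0 hε1

lemma d_lt_M : d < bigM d ε := by
  rw [bigM, Nat.lt_ceil]
  have hd0 : (0:ℝ) < d := by positivity
  rw [lt_div_iff₀ hε0]
  nlinarith

lemma N_add_d : bigN d ε + d = bigM d ε := by
  have := d_lt_M hd hε0 hε1 (d := d) (ε := ε)
  rw [bigN]; omega

lemma gam_anti {k m : ℕ} (h : k ≤ m) : gam d ε m ≤ gam d ε k := by
  rw [gam, gam]
  have : (k:ℝ) ≤ m := by exact_mod_cast h
  have : 0 ≤ ε / d := by positivity
  nlinarith

lemma M_facts : (d : ℝ) / ε ≤ bigM d ε ∧ (bigM d ε : ℝ) < (d : ℝ) / ε + 1 := by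
  constructor
  · exact Nat.le_ceil _
  · exact Nat.ceil_lt_add_one (by positivity)

lemma gamN_pos : 0 < gam d ε (bigN d ε) := by
  have hM := M_facts hd hε0 hε1 (d := d) (ε := ε)
  have hdM := d_lt_M hd hε0 hε1 (d := d) (ε := ε)
  have hcast : ((bigN d ε : ℝ)) = (bigM d ε : ℝ) - d := by
    rw [bigN]; push_cast [Nat.cast_sub (le_of_lt hdM)]; ring
  rw [gam, hcast]
  have hd0 : (0:ℝ) < d := by positivity
  have hd1 : (1:ℝ) ≤ d := by exact_mod_cast le_trans (by norm_num) hd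
  have h2 : ((bigM d ε : ℝ) - d) * ε < d := by
    have hh := hM.2
    have hde : (d:ℝ)/ε * ε = d := div_mul_cancel₀ _ (ne_of_gt hε0)
    nlinarith
  have : ((bigM d ε : ℝ) - d) * (ε / d) < 1 := by
    rw [mul_div_assoc'] at *
    rw [div_lt_one hd0]
    exact h2
  linarith

lemma gamN_le : gam d ε (bigN d ε) ≤ ε := by
  have hM := M_facts hd hε0 hε1 (d := d) (ε := ε)
  have hdM := d_lt_M hd hε0 hε1 (d := d) (ε := ε)
  have hcast : ((bigN d ε : ℝ)) = (bigM d ε : ℝ) - d := by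
    rw [bigN]; push_cast [Nat.cast_sub (le_of_lt hdM)]; ring
  rw [gam, hcast]
  have hd0 : (0:ℝ) < d := by positivity
  have h1 : (d : ℝ) ≤ (bigM d ε : ℝ) * ε := by
    have := hM.1
    rw [div_le_iff₀ hε0] at this; linarith
  have h2 : (1 - ε) * d ≤ ((bigM d ε:ℝ) - d) * ε := by nlinarith
  have h3 : (1 - ε) ≤ ((bigM d ε:ℝ) - d) * ε / d := by
    rw [le_div_iff₀ hd0]; linarith
  rw [mul_div_assoc'] ; linarith

lemma gam_pos {k : ℕ} (hk : k ≤ bigN d ε) : 0 < gam d ε k :=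
  lt_of_lt_of_le (gamN_pos hd hε0 hε1) (gam_anti hd hε0 hε1 hk)

end

/-! ### The step function and the path recursion -/

noncomputable def stepFn (d : ℕ) (ε : ℝ) (N k : ℕ) (x : ℝ) : ℕ :=
  Nat.find (p := fun m => N ≤ m ∨ (k ≤ m ∧ gam d ε (m + 1) < gam d ε k * x))
    ⟨N, Or.inl le_rfl⟩

section
variable {d : ℕ} {ε : ℝ} {N k : ℕ} {x : ℝ}

lemma stepFn_le_N : stepFn d ε N k x ≤ N := by
  unfold stepFn
  exact Nat.find_le (Or.inl le_rfl)

lemma stepFn_spec : N ≤ stepFn d ε N k x ∨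
    (k ≤ stepFn d ε N k x ∧ gam d ε (stepFn d ε N k x + 1) < gam d ε k * x) := by
  unfold stepFn
  exact Nat.find_spec (p := fun m => N ≤ m ∨ (k ≤ m ∧ gam d ε (m + 1) < gam d ε k * x))
    ⟨N, Or.inl le_rfl⟩

lemma stepFn_min {m : ℕ} (hm : m < stepFn d ε N k x) :
    ¬ (N ≤ m ∨ (k ≤ m ∧ gam d ε (m + 1) < gam d ε k * x)) := by
  unfold stepFn at hm
  exact Nat.find_min (p := fun m => N ≤ m ∨ (k ≤ m ∧ gam d ε (m + 1) < gam d ε k * x))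
    ⟨N, Or.inl le_rfl⟩ hm

lemma le_stepFn (hk : k ≤ N) : k ≤ stepFn d ε N k x := by
  rcases stepFn_spec (d := d) (ε := ε) (N := N) (k := k) (x := x) with h | h
  · exact le_trans hk h
  · exact h.1

lemma stepFn_full (h : stepFn d ε N k x < N) :
    k ≤ stepFn d ε N k x ∧ gam d ε (stepFn d ε N k x + 1) < gam d ε k * x := by
  rcases stepFn_spec (d := d) (ε := ε) (N := N) (k := k) (x := x) with h' | h'
  · exact absurd h (not_lt.2 h')
  · exact h'

lemma mul_le_gam_stepFn (hk : k ≤ N) (hγ : 0 < gam d ε k) (hx : x ≤ 1) :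
    gam d ε k * x ≤ gam d ε (stepFn d ε N k x) := by
  rcases eq_or_lt_of_le (le_stepFn (d := d) (ε := ε) (x := x) hk) with he | hlt
  · rw [← he]
    nlinarith
  · have hmin := stepFn_min (d := d) (ε := ε) (N := N) (k := k) (x := x)
      (m := stepFn d ε N k x - 1) (by omega)
    push_neg at hmin
    have h2 := hmin.2 (by omega)
    have h1 : stepFn d ε N k x - 1 + 1 = stepFn d ε N k x := by omega
    rw [h1] at h2
    exact h2

end

noncomputable def pathFn (d : ℕ) (ε : ℝ) (N : ℕ) (x : ℕ → ℝ) : ℕ → ℕ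
  | 0 => 0
  | j + 1 => stepFn d ε N (pathFn d ε N x j) (x j)

/-! ### Encoding of cells by monotone sequences -/

def sfun (d : ℕ) (σ : Fin d → ℕ) : ℕ → ℕ := fun k =>
  if h : 0 < k ∧ k ≤ d then σ ⟨k - 1, by omega⟩ else 0

noncomputable def upC (d : ℕ) (ε : ℝ) (σ : Fin d → ℕ) : Fin d → ℝ := fun j =>
  gam d ε (sfun d σ (j.val + 1)) / gam d ε (sfun d σ j.val)

noncomputable def loC (d : ℕ) (ε : ℝ) (N : ℕ) (σ : Fin d → ℕ) : Fin d → ℝ :=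
  if ∀ l, σ l < N then
    (fun j => gam d ε (sfun d σ (j.val + 1) + 1) / gam d ε (sfun d σ j.val))
  else fun _ => 0

noncomputable def idxSet (d N : ℕ) : Finset (Fin d → ℕ) :=
  (Fintype.piFinset fun _ : Fin d => Finset.range (N + 1)).filter (fun σ => Monotone σ)

noncomputable def coverSet (d : ℕ) (ε : ℝ) (N : ℕ) : Finset ((Fin d → ℝ) → ℝ) :=
  ((idxSet d N).image fun σ => (anchoredBox d (upC d ε σ)).indicator fun _ => (1:ℝ)) ∪
  ((idxSet d N).image fun σ => (anchoredBox d (loC d ε N σ)).indicator fun _ => (1:ℝ))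

lemma sfun_zero (d : ℕ) (σ : Fin d → ℕ) : sfun d σ 0 = 0 := by simp [sfun]

lemma sfun_pos (d : ℕ) (σ : Fin d → ℕ) {k : ℕ} (h1 : 0 < k) (h2 : k ≤ d) :
    sfun d σ k = σ ⟨k - 1, by omega⟩ := by
  rw [sfun, dif_pos ⟨h1, h2⟩]

lemma sfun_le_N {d N : ℕ} {σ : Fin d → ℕ} (hσ1 : ∀ l, σ l ≤ N) (k : ℕ) :
    sfun d σ k ≤ N := by
  rw [sfun]
  split
  · exact hσ1 _
  · exact Nat.zero_le _

lemma sfun_mono {d : ℕ} {σ : Fin d → ℕ} (hσ2 : Monotone σ) {k : ℕ} (hk : k + 1 ≤ d) :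
    sfun d σ k ≤ sfun d σ (k + 1) := by
  rcases Nat.eq_zero_or_pos k with rfl | hpos
  · rw [sfun_zero]; exact Nat.zero_le _
  · rw [sfun_pos d σ hpos (by omega), sfun_pos d σ (by omega) hk]
    exact hσ2 (Fin.mk_le_mk.mpr (by omega))

lemma mem_idxSet {d N : ℕ} {σ : Fin d → ℕ} :
    σ ∈ idxSet d N ↔ (∀ l, σ l ≤ N) ∧ Monotone σ := by
  rw [idxSet, Finset.mem_filter, Fintype.mem_piFinset]
  simp only [Finset.mem_range]
  constructor
  · rintro ⟨h1, h2⟩; exact ⟨fun l => by have := h1 l; omega, h2⟩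
  · rintro ⟨h1, h2⟩; exact ⟨fun l => by have := h1 l; omega, h2⟩

/-! ### Validity of the brackets -/

section
variable {d : ℕ} {ε : ℝ} (hd : 3 ≤ d) (hε0 : 0 < ε) (hε1 : ε < 1)
variable {σ : Fin d → ℕ} (hσ1 : ∀ l, σ l ≤ bigN d ε) (hσ2 : Monotone σ)

include hd hε0 hε1 hσ1

lemma gam_sfun_pos (k : ℕ) : 0 < gam d ε (sfun d σ k) :=
  gam_pos hd hε0 hε1 (sfun_le_N hσ1 k)

include hσ2

lemma up_nonneg : (0 : Fin d → ℝ) ≤ upC d ε σ := by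
  intro j
  exact le_of_lt (div_pos (gam_sfun_pos hd hε0 hε1 hσ1 _) (gam_sfun_pos hd hε0 hε1 hσ1 _))

lemma up_le_one : upC d ε σ ≤ 1 := by
  intro j
  have : upC d ε σ j ≤ 1 := by
    rw [upC, div_le_one (gam_sfun_pos hd hε0 hε1 hσ1 _)]
    exact gam_anti hd hε0 hε1 (sfun_mono hσ2 j.2)
  simpa using this

lemma integral_up :
    ∫ t, (anchoredBox d (upC d ε σ)).indicator (fun _ => (1:ℝ)) t ∂(cubeMeasure d)
      = gam d ε (sfun d σ d) := by
  rw [integral_box (up_nonneg hd hε0 hε1 hσ1 hσ2) (up_le_one hd hε0 hε1 hσ1 hσ2)]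
  have h1 : ∏ j : Fin d, upC d ε σ j
      = ∏ i ∈ Finset.range d, (gam d ε (sfun d σ (i + 1)) / gam d ε (sfun d σ i)) :=
    Fin.prod_univ_eq_prod_range (fun i => gam d ε (sfun d σ (i + 1)) / gam d ε (sfun d σ i)) d
  rw [h1, prod_ratio _ (fun k => ne_of_gt (gam_sfun_pos hd hε0 hε1 hσ1 k)), sfun_zero]
  have : gam d ε 0 = 1 := by simp [gam]
  rw [this, div_one]

lemma leaf_up_le (hleaf : ¬ ∀ l, σ l < bigN d ε) : gam d ε (sfun d σ d) ≤ ε := by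
  push_neg at hleaf
  obtain ⟨l, hl⟩ := hleaf
  have hlast : sfun d σ d = bigN d ε := by
    rw [sfun_pos d σ (by omega) le_rfl]
    have h1 : σ l ≤ σ ⟨d - 1, by omega⟩ := hσ2 (by
      rw [Fin.le_def]
      simp only []
      omega)
    have := hσ1 ⟨d - 1, by omega⟩
    omega
  rw [hlast]
  exact gamN_le hd hε0 hε1

lemma integral_diff_le :
    (∫ t, (anchoredBox d (upC d ε σ)).indicator (fun _ => (1:ℝ)) t ∂(cubeMeasure d)) -
    (∫ t, (anchoredBox d (loC d ε (bigN d ε) σ)).indicator (fun _ => (1:ℝ)) t ∂(cubeMeasure d))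
      ≤ ε := by
  by_cases hfull : ∀ l, σ l < bigN d ε
  · -- full bracket
    have hlt : ∀ k, 0 < k → k ≤ d → sfun d σ k < bigN d ε := by
      intro k h1 h2
      rw [sfun_pos d σ h1 h2]
      exact hfull _
    have hlo : loC d ε (bigN d ε) σ = fun j =>
        gam d ε (sfun d σ (j.val + 1) + 1) / gam d ε (sfun d σ j.val) := if_pos hfull
    have hlo0 : (0 : Fin d → ℝ) ≤ loC d ε (bigN d ε) σ := by
      intro j
      rw [hlo]
      refine le_of_lt (div_pos (gam_pos hd hε0 hε1 ?_) (gam_sfun_pos hd hε0 hε1 hσ1 _))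
      have := hlt (j.val + 1) (by omega) (by omega)
      omega
    have hsucc : ∀ k : ℕ, gam d ε (sfun d σ (k + 1)) - gam d ε (sfun d σ (k + 1) + 1)
        = ε / d := by
      intro k
      rw [gam_succ]
      ring
    have hlole : loC d ε (bigN d ε) σ ≤ upC d ε σ := by
      intro j
      rw [hlo]
      have : gam d ε (sfun d σ (j.val + 1) + 1) / gam d ε (sfun d σ j.val)
          ≤ gam d ε (sfun d σ (j.val + 1)) / gam d ε (sfun d σ j.val) := by
        rw [div_le_div_iff_of_pos_right (gam_sfun_pos hd hε0 hε1 hσ1 _)]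
        exact gam_anti hd hε0 hε1 (Nat.le_succ _)
      exact this
    have hlo1 : loC d ε (bigN d ε) σ ≤ 1 :=
      le_trans hlole (up_le_one hd hε0 hε1 hσ1 hσ2)
    have hupI := integral_up hd hε0 hε1 hσ1 hσ2
    have hloI : ∫ t, (anchoredBox d (loC d ε (bigN d ε) σ)).indicator
        (fun _ => (1:ℝ)) t ∂(cubeMeasure d) = ∏ j : Fin d, loC d ε (bigN d ε) σ j :=
      integral_box hlo0 hlo1
    rw [hupI, hloI]
    -- rewrite both products as products over `range d`
    set A : ℕ → ℝ := fun k => gam d ε (sfun d σ (k + 1) + 1) / gam d ε (sfun d σ k) with hA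
    set B : ℕ → ℝ := fun k => gam d ε (sfun d σ (k + 1)) / gam d ε (sfun d σ k) with hB
    have hgB : ∀ j : ℕ, ∏ i ∈ Finset.range j, B i = gam d ε (sfun d σ j) := by
      intro j
      have := prod_ratio (fun k => gam d ε (sfun d σ k))
        (fun k => ne_of_gt (gam_sfun_pos hd hε0 hε1 hσ1 k)) j
      rw [hB]
      rw [this, sfun_zero]
      have h1 : gam d ε 0 = 1 := by simp [gam]
      rw [h1, div_one]
    have hup2 : gam d ε (sfun d σ d) = ∏ i ∈ Finset.range d, B i := (hgB d).symm
    have hlo2 : ∏ j : Fin d, loC d ε (bigN d ε) σ j = ∏ i ∈ Finset.range d, A i := by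
      rw [Finset.prod_congr rfl (fun j _ => by rw [hlo])]
      exact Fin.prod_univ_eq_prod_range A d
    rw [hup2, hlo2]
    have hA0 : ∀ i < d, 0 ≤ A i := by
      intro i hi
      refine le_of_lt (div_pos (gam_pos hd hε0 hε1 ?_) (gam_sfun_pos hd hε0 hε1 hσ1 _))
      have := hlt (i + 1) (by omega) (by omega)
      omega
    have hAB : ∀ i < d, A i ≤ B i := by
      intro i hi
      rw [hA, hB, div_le_div_iff_of_pos_right (gam_sfun_pos hd hε0 hε1 hσ1 _)]
      exact gam_anti hd hε0 hε1 (Nat.le_succ _)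
    have hB1 : ∀ i < d, B i ≤ 1 := by
      intro i hi
      rw [hB, div_le_one (gam_sfun_pos hd hε0 hε1 hσ1 _)]
      exact gam_anti hd hε0 hε1 (sfun_mono hσ2 (by omega))
    refine le_trans (prod_sub_prod_le d A B hA0 hAB hB1) ?_
    have hsum : ∀ j ∈ Finset.range d, (B j - A j) * ∏ i ∈ Finset.range j, B i = ε / d := by
      intro j hj
      rw [hgB j, hB, hA, div_sub_div_same, hsucc j]
      exact div_mul_cancel₀ _ (ne_of_gt (gam_sfun_pos hd hε0 hε1 hσ1 j))
    rw [Finset.sum_congr rfl hsum, Finset.sum_const, Finset.card_range, nsmul_eq_mul]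
    have hd0 : (d:ℝ) ≠ 0 := by positivity
    rw [mul_div_cancel₀ _ hd0]
  · -- leaf bracket
    have hlo : loC d ε (bigN d ε) σ = fun _ => 0 := if_neg hfull
    have h0 : ∫ t, (anchoredBox d (loC d ε (bigN d ε) σ)).indicator
        (fun _ => (1:ℝ)) t ∂(cubeMeasure d) = 0 := by
      have hb0 : (0 : Fin d → ℝ) ≤ loC d ε (bigN d ε) σ := by
        intro j; rw [hlo]; exact le_rfl
      have hb1 : loC d ε (bigN d ε) σ ≤ 1 := by
        intro j; rw [hlo]; norm_num
      rw [integral_box hb0 hb1]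
      have : ∀ j : Fin d, loC d ε (bigN d ε) σ j = 0 := fun j => by rw [hlo]
      rw [Finset.prod_congr rfl (fun j _ => this j), Finset.prod_const]
      exact zero_pow (by
        rw [Finset.card_univ, Fintype.card_fin]
        omega)
    rw [integral_up hd hε0 hε1 hσ1 hσ2, h0, sub_zero]
    exact leaf_up_le hd hε0 hε1 hσ1 hσ2 hfull

end

/-! ### Coverage: every anchored box is bracketed -/

section
variable {d : ℕ} {ε : ℝ} (hd : 3 ≤ d) (hε0 : 0 < ε) (hε1 : ε < 1)

include hd hε0 hε1

lemma cover_exists (x : Fin d → ℝ) (hx : x ∈ Set.Icc (0 : Fin d → ℝ) 1) :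
    ∃ σ : Fin d → ℕ, σ ∈ idxSet d (bigN d ε) ∧
      (∀ j, loC d ε (bigN d ε) σ j ≤ x j) ∧ (∀ j, x j ≤ upC d ε σ j) := by
  obtain ⟨hx0, hx1⟩ := hx
  set N := bigN d ε with hN
  set x' : ℕ → ℝ := fun k => if h : k < d then x ⟨k, h⟩ else 0 with hx'
  set p : ℕ → ℕ := pathFn d ε N x' with hp
  have hple : ∀ j, p j ≤ N := by
    intro j
    induction j with
    | zero => exact Nat.zero_le _
    | succ j _ => exact stepFn_le_N
  have hpsucc : ∀ j, p j ≤ p (j + 1) := fun j => le_stepFn (hple j)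
  have hpmono : Monotone p := monotone_nat_of_le_succ hpsucc
  set σ : Fin d → ℕ := fun l => p (l.val + 1) with hσ
  have hσmem : σ ∈ idxSet d N := by
    rw [mem_idxSet]
    exact ⟨fun l => hple _, fun l l' hll' => hpmono (by
      have : (l : ℕ) ≤ (l' : ℕ) := hll'
      omega)⟩
  have hsf : ∀ k, k ≤ d → sfun d σ k = p k := by
    intro k hk
    rcases Nat.eq_zero_or_pos k with rfl | hpos
    · rw [sfun_zero]; rfl
    · rw [sfun_pos d σ hpos hk, hσ]
      simp only []
      congr 1
      omega
  have hx'val : ∀ j : Fin d, x' j.val = x j := by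
    intro j
    show (if h : (j:ℕ) < d then x ⟨j, h⟩ else 0) = x j
    rw [dif_pos j.2]
  have hx01 : ∀ j : Fin d, 0 ≤ x j ∧ x j ≤ 1 := fun j => ⟨hx0 j, hx1 j⟩
  refine ⟨σ, hσmem, ?_, ?_⟩
  · -- lower corner is below x
    intro j
    by_cases hfull : ∀ l, σ l < N
    · rw [loC, if_pos hfull]
      have hstep : p (j.val + 1) = stepFn d ε N (p j.val) (x' j.val) := rfl
      have hlt : stepFn d ε N (p j.val) (x' j.val) < N := by
        rw [← hstep]; exact hfull j
      have hfu := (stepFn_full hlt).2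
      rw [← hstep] at hfu
      have hpos := gam_pos hd hε0 hε1 (hple j.val)
      have h2 : gam d ε (p (j.val + 1) + 1) < gam d ε (p j.val) * x j := by
        rw [← hx'val j]; exact hfu
      rw [hsf (j.val + 1) (by omega), hsf j.val (by omega)]
      rw [div_le_iff₀ hpos]
      nlinarith
    · rw [loC, if_neg hfull]
      exact hx0 j
  · -- x is below upper corner
    intro j
    have hstep : p (j.val + 1) = stepFn d ε N (p j.val) (x' j.val) := rfl
    have hpos := gam_pos hd hε0 hε1 (hple j.val)
    have hkey : gam d ε (p j.val) * x' j.val ≤ gam d ε (p (j.val + 1)) := by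
      rw [hstep]
      exact mul_le_gam_stepFn (hple j.val) hpos (by rw [hx'val j]; exact hx1 j)
    rw [hx'val j] at hkey
    rw [upC, hsf (j.val + 1) (by omega), hsf j.val (by omega), le_div_iff₀ hpos]
    nlinarith

end

/-! ### Counting -/

lemma card_idx_le (d N : ℕ) : (idxSet d N).card ≤ (N + d).choose d := by
  classical
  have key : ∀ σ ∈ idxSet d N, StrictMono (fun l : Fin d => σ l + (l : ℕ)) := by
    intro σ hσ
    rw [mem_idxSet] at hσ
    intro l l' hll'
    have hm1 : σ l ≤ σ l' := hσ.2 (le_of_lt hll')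
    have hm2 : (l:ℕ) < (l':ℕ) := hll'
    simp only []
    omega
  have hcard := Finset.card_le_card_of_injOn
    (s := idxSet d N)
    (f := fun σ : Fin d → ℕ => Finset.image (fun l : Fin d => σ l + (l : ℕ)) Finset.univ)
    (t := (Finset.range (N + d)).powersetCard d) ?_ ?_
  · simpa [Finset.card_powersetCard, Finset.card_range] using hcard
  · intro σ hσ
    rw [Finset.mem_coe] at hσ
    rw [Finset.mem_coe, Finset.mem_powersetCard]
    constructor
    · intro m hm
      rw [Finset.mem_image] at hm
      obtain ⟨l, _, rfl⟩ := hm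
      rw [mem_idxSet] at hσ
      have h1 := hσ.1 l
      rw [Finset.mem_range]
      have : (l : ℕ) < d := l.2
      omega
    · rw [Finset.card_image_of_injective _ (key σ hσ).injective, Finset.card_univ,
        Fintype.card_fin]
  · intro σ hσ τ hτ him
    have hcσ : (Finset.image (fun l : Fin d => σ l + (l : ℕ)) Finset.univ).card = d := by
      rw [Finset.card_image_of_injective _ (key σ hσ).injective, Finset.card_univ,
        Fintype.card_fin]
    have h1 := Finset.orderEmbOfFin_unique hcσ
      (f := fun l : Fin d => σ l + (l : ℕ)) (fun l => Finset.mem_image_of_mem _ (mem_univ l))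
      (key σ hσ)
    have him' : (Finset.image (fun l : Fin d => τ l + (l : ℕ)) Finset.univ) =
        (Finset.image (fun l : Fin d => σ l + (l : ℕ)) Finset.univ) := him.symm
    have h2 := Finset.orderEmbOfFin_unique hcσ
      (f := fun l : Fin d => τ l + (l : ℕ))
      (fun l => him' ▸ Finset.mem_image_of_mem _ (mem_univ l)) (key τ hτ)
    funext l
    have := congrFun (h1.trans h2.symm) l
    omega

lemma choose_bound {d M : ℕ} {x : ℝ} (hd : 3 ≤ d) (hdx : (d : ℝ) < x)
    (hxM : x ≤ M) (hMx : (M : ℝ) < x + 1) :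
    (M.choose d : ℝ) ≤ x ^ d / (Nat.factorial d) := by
  have hdM : d < M := by
    have : (d:ℝ) < M := lt_of_lt_of_le hdx hxM
    exact_mod_cast this
  have hfac : (0:ℝ) < (Nat.factorial d : ℝ) := by
    exact_mod_cast Nat.factorial_pos d
  rw [le_div_iff₀ hfac]
  have hkey : (M.choose d : ℝ) * (Nat.factorial d : ℝ) = (M.descFactorial d : ℝ) := by
    rw [← Nat.cast_mul]
    congr 1
    rw [Nat.descFactorial_eq_factorial_mul_choose]
    ring
  rw [hkey, Nat.descFactorial_eq_prod_range]
  rw [Nat.cast_prod]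
  have hcast : ∀ i ∈ range d, ((M - i : ℕ) : ℝ) = (M : ℝ) - i := by
    intro i hi
    rw [mem_range] at hi
    rw [Nat.cast_sub (by omega)]
  rw [prod_congr rfl hcast]
  have hsplit : ∏ i ∈ range d, ((M:ℝ) - i) =
      (∏ i ∈ Ico (0:ℕ) 3, ((M:ℝ) - i)) * ∏ i ∈ Ico (3:ℕ) d, ((M:ℝ) - i) := by
    rw [Finset.prod_Ico_consecutive _ (by omega) hd, ← range_eq_Ico]
  rw [hsplit]
  have h3 : (∏ i ∈ Ico (0:ℕ) 3, ((M:ℝ) - i)) = (M:ℝ) * ((M:ℝ) - 1) * ((M:ℝ) - 2) := by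
    norm_num [Finset.prod_Ico_eq_prod_range]
    rw [show (3:ℕ) = 2 + 1 by rfl, prod_range_succ, prod_range_succ, prod_range_succ]
    norm_num
  have hx3 : (3:ℝ) ≤ x := le_trans (by exact_mod_cast hd) (le_of_lt hdx)
  have hfirst : (M:ℝ) * ((M:ℝ) - 1) * ((M:ℝ) - 2) ≤ x ^ 3 := by
    have h1 : (M:ℝ) ≤ x + 1 := le_of_lt hMx
    have h2 : (M:ℝ) - 1 ≤ x := by linarith
    have h3' : (M:ℝ) - 2 ≤ x - 1 := by linarith
    have hp1 : (0:ℝ) ≤ (M:ℝ) - 1 := by linarith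
    have hp2 : (0:ℝ) ≤ (M:ℝ) - 2 := by linarith
    have e1 : ((M:ℝ) - 1) * ((M:ℝ) - 2) ≤ x * (x - 1) :=
      mul_le_mul h2 h3' hp2 (by linarith)
    have e2 : (M:ℝ) * (((M:ℝ) - 1) * ((M:ℝ) - 2)) ≤ (x + 1) * (x * (x - 1)) :=
      mul_le_mul h1 e1 (by nlinarith) (by linarith)
    nlinarith [e2]
  have hsecond : ∏ i ∈ Ico (3:ℕ) d, ((M:ℝ) - i) ≤ x ^ (d - 3) := by
    calc ∏ i ∈ Ico (3:ℕ) d, ((M:ℝ) - i) ≤ ∏ i ∈ Ico (3:ℕ) d, x := by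
          refine prod_le_prod ?_ ?_ <;> intro i hi <;> rw [mem_Ico] at hi
          · have h5 : (i + 1 : ℕ) ≤ M := by omega
            have h6 : ((i:ℝ)) + 1 ≤ (M:ℝ) := by exact_mod_cast h5
            linarith
          · have : (3:ℝ) ≤ (i:ℝ) := by exact_mod_cast hi.1
            linarith
      _ = x ^ (d - 3) := by rw [prod_const, Nat.card_Ico]
  rw [h3]
  calc (M:ℝ) * ((M:ℝ) - 1) * ((M:ℝ) - 2) * ∏ i ∈ Ico (3:ℕ) d, ((M:ℝ) - i)
      ≤ x ^ 3 * x ^ (d - 3) := by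
        refine mul_le_mul hfirst hsecond (prod_nonneg ?_) (by positivity)
        intro i hi
        rw [mem_Ico] at hi
        have : (i:ℝ) < M := by exact_mod_cast (by omega : i < M)
        linarith
    _ = x ^ d := by rw [← pow_add]; congr 1; omega

end CoverAux

/-- For `d ≥ 3` and `ε ∈ (0,1)`, the minimal cardinality of a one-sided `ε`-cover of the
family `C_d` of anchored boxes in `[0,1]^d` satisfies
`N(ε, C_d, ‖·‖_{L¹}) ≤ 2 (d^d/d!) ε^{-d}`. -/
theorem deltaCoverNumberC_le (d : ℕ) (hd : 3 ≤ d) (ε : ℝ) (hε : ε ∈ Set.Ioo (0 : ℝ) 1) :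
    (deltaCoverNumberC d ε : ℝ) ≤ 2 * ((d : ℝ) ^ d / (Nat.factorial d)) * (1 / ε) ^ d := by
  classical
  obtain ⟨hε0, hε1⟩ := hε
  set N := CoverAux.bigN d ε with hN
  set Γ := CoverAux.coverSet d ε N with hΓ
  -- the constructed set is an ε-cover
  have hcover : IsDeltaCoverC d ε Γ := by
    constructor
    · intro g hg
      rw [hΓ, CoverAux.coverSet, Finset.mem_union] at hg
      rcases hg with hg | hg <;>
      · rw [Finset.mem_image] at hg
        obtain ⟨σ, _, rfl⟩ := hg
        exact CoverAux.integrable_box d _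
    · intro x hx
      obtain ⟨σ, hσmem, hlo, hup⟩ := CoverAux.cover_exists hd hε0 hε1 x hx
      obtain ⟨hσ1, hσ2⟩ := CoverAux.mem_idxSet.1 hσmem
      refine ⟨(anchoredBox d (CoverAux.loC d ε N σ)).indicator fun _ => (1:ℝ), ?_,
        (anchoredBox d (CoverAux.upC d ε σ)).indicator fun _ => (1:ℝ), ?_, ?_, ?_⟩
      · rw [hΓ, CoverAux.coverSet, Finset.mem_union]
        exact Or.inr (Finset.mem_image_of_mem _ hσmem)
      · rw [hΓ, CoverAux.coverSet, Finset.mem_union]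
        exact Or.inl (Finset.mem_image_of_mem _ hσmem)
      · intro t _
        constructor
        · exact Set.indicator_le_indicator_of_subset
            (CoverAux.box_mono (fun j => hlo j)) (fun _ => by norm_num) t
        · exact Set.indicator_le_indicator_of_subset
            (CoverAux.box_mono (fun j => hup j)) (fun _ => by norm_num) t
      · rw [integral_sub (CoverAux.integrable_box d _) (CoverAux.integrable_box d _)]
        exact CoverAux.integral_diff_le hd hε0 hε1 hσ1 hσ2
  -- hence the covering number is at most the cardinality of `Γ`
  have h1 : deltaCoverNumberC d ε ≤ Γ.card :=
    Nat.sInf_le ⟨Γ, hcover, rfl⟩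
  -- count `Γ`
  have h2 : Γ.card ≤ 2 * (CoverAux.bigM d ε).choose d := by
    rw [hΓ, CoverAux.coverSet]
    refine le_trans (Finset.card_union_le _ _) ?_
    have hi := CoverAux.card_idx_le d N
    have hNd : N + d = CoverAux.bigM d ε := by
      rw [hN]; exact CoverAux.N_add_d hd hε0 hε1
    rw [hNd] at hi
    have ha := le_trans (Finset.card_image_le
      (f := fun σ => (anchoredBox d (CoverAux.upC d ε σ)).indicator fun _ => (1:ℝ))) hi
    have hb := le_trans (Finset.card_image_le
      (f := fun σ => (anchoredBox d (CoverAux.loC d ε N σ)).indicator fun _ => (1:ℝ))) hi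
    omega
  -- numeric bound on the binomial coefficient
  have hd0 : (0:ℝ) < d := by positivity
  have hdx : (d : ℝ) < (d:ℝ) / ε := by
    rw [lt_div_iff₀ hε0]
    nlinarith
  have h3 : ((CoverAux.bigM d ε).choose d : ℝ) ≤ ((d:ℝ)/ε) ^ d / (Nat.factorial d) :=
    CoverAux.choose_bound hd hdx (Nat.le_ceil _) (Nat.ceil_lt_add_one (by positivity))
  have h4 : ((d:ℝ)/ε) ^ d = (d:ℝ) ^ d * (1/ε) ^ d := by
    rw [div_eq_mul_one_div (d:ℝ) ε, mul_pow]
  calc (deltaCoverNumberC d ε : ℝ) ≤ (Γ.card : ℝ) := by exact_mod_cast h1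
    _ ≤ 2 * ((CoverAux.bigM d ε).choose d : ℝ) := by exact_mod_cast h2
    _ ≤ 2 * (((d:ℝ)/ε) ^ d / (Nat.factorial d)) := by linarith
    _ = 2 * ((d : ℝ) ^ d / (Nat.factorial d)) * (1 / ε) ^ d := by
        rw [h4]; ring
end
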